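/- (Theorem 2) Let c ≥ 2, n ≥ 2, g ≥ 1, let R : Fin n → ZMod c be a reference string, and let X₁, …, X_g : Fin n → ZMod c be strings each differing from R in at most d positions, where 1 ≤ d ≤ n. Let t be a positive multiple of d with t ≥ 2 * d * log₂ n + min (d * log₂ g) (d² * log₂ (Real.exp 1 * n / d)). Then, with probability at least 1 − (c − 1)/n, the random design on n items with 2t tests and column-sparsity t/d is simultaneously D_l(Xᵢ)-distinguishing for every i ∈ {1, …, g} and every nonzero l ∈ ZMod c; on this event every string Xᵢ is uniquely determined by the responses b(R, Xᵢ) and b(Q_{k,l}, Xᵢ) to the 2t(c−1) nonadaptive shifted queries Q_{k,l}. -/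

import Mathlib

/-- The space of nonadaptive designs on `n` items with `2t` tests and
column-sparsity `s`: functions assigning to each item an `s`-element subset of
`Fin (2t)`.  The uniform distribution on this set is the product over items of
the uniform distributions on `s`-element subsets. -/
abbrev designSpace (n t s : ℕ) : Finset (Fin n → Finset (Fin (2 * t))) :=
  Finset.univ.filter (fun S => ∀ j, (S j).card = s)

/-- The event that the design `S` is `D_l(Xᵢ)`-distinguishing for every string
`Xᵢ` in the family and every nonzero shift `l`, where
`D_l(X) = {j : X j = R j + l}`. -/
abbrev allDistinguishing (n c g t : ℕ) (R : Fin n → ZMod c)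
    (X : Fin g → Fin n → ZMod c) (S : Fin n → Finset (Fin (2 * t))) : Prop :=
  ∀ i : Fin g, ∀ l : ZMod c, l ≠ 0 → ∀ j, X i j ≠ R j + l →
    ∃ a ∈ S j, ∀ k, X i k = R k + l → a ∉ S k

noncomputable instance (n c g t : ℕ) (R : Fin n → ZMod c) (X : Fin g → Fin n → ZMod c) :
    DecidablePred (allDistinguishing n c g t R X) := fun _ => Classical.dec _

lemma descF_le (t s : ℕ) : 2 ^ s * t.descFactorial s ≤ (2*t).descFactorial s := by
  induction s with
  | zero => simp
  | succ s ih =>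
    rw [Nat.descFactorial_succ, Nat.descFactorial_succ, pow_succ]
    calc 2 ^ s * 2 * ((t - s) * t.descFactorial s)
        = (2 * (t - s)) * (2 ^ s * t.descFactorial s) := by ring
      _ ≤ (2 * t - s) * (2*t).descFactorial s := by
          exact Nat.mul_le_mul (by omega) ih

lemma pow_mul_choose_le (t s : ℕ) : 2 ^ s * t.choose s ≤ (2*t).choose s := by
  have h := descF_le t s
  rw [Nat.descFactorial_eq_factorial_mul_choose, Nat.descFactorial_eq_factorial_mul_choose] at h
  have := Nat.factorial_pos s
  calc 2 ^ s * t.choose s = (2 ^ s * t.choose s) := rfl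
    _ ≤ (2*t).choose s := by
        refine Nat.le_of_mul_le_mul_left ?_ this
        calc Nat.factorial s * (2 ^ s * t.choose s)
            = 2 ^ s * (Nat.factorial s * t.choose s) := by ring
          _ ≤ Nat.factorial s * (2*t).choose s := h

lemma bad_count (n t s d : ℕ) (hds : d * s = t) (j : Fin n) (D : Finset (Fin n))
    (hj : j ∉ D) (hD : D.card ≤ d) :
    ((designSpace n t s).filter (fun S => S j ⊆ D.biUnion S)).card * (2*t).choose s
      ≤ t.choose s * (designSpace n t s).card := by
  classical
  set bad := (designSpace n t s).filter (fun S => S j ⊆ D.biUnion S) with hbad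
  set f : (Fin n → Finset (Fin (2 * t))) → (Fin n → Finset (Fin (2 * t))) :=
    fun S => Function.update S j ∅ with hf
  -- every T in the image has empty j-coordinate and s-card others
  have himg : ∀ T ∈ bad.image f, T j = ∅ ∧ ∀ k, k ≠ j → (T k).card = s := by
    intro T hT
    obtain ⟨S0, hS0, rfl⟩ := Finset.mem_image.1 hT
    have hS0d : ∀ k, (S0 k).card = s := by
      have := Finset.mem_filter.1 (Finset.mem_filter.1 hS0).1
      exact this.2
    constructor
    · simp [hf]
    · intro k hk; simp [hf, Function.update_of_ne hk, hS0d k]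
  have h1 : bad.card ≤ t.choose s * (bad.image f).card := by
    apply Finset.card_le_mul_card_image
    intro T hT
    obtain ⟨hTj, hTk⟩ := himg T hT
    have hUcard : (D.biUnion T).card ≤ t := by
      calc (D.biUnion T).card ≤ ∑ k ∈ D, (T k).card := Finset.card_biUnion_le
        _ = D.card * s := by
            rw [Finset.sum_congr rfl (fun k hk => hTk k (by rintro rfl; exact hj hk))]
            simp [mul_comm]
        _ ≤ d * s := Nat.mul_le_mul_right s hD
        _ = t := hds
    calc (bad.filter (fun S => f S = T)).card
        ≤ ((D.biUnion T).powersetCard s).card := by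
          apply Finset.card_le_card_of_injOn (fun S => S j)
          · intro S hS
            obtain ⟨hSbad, hfS⟩ := Finset.mem_filter.1 hS
            obtain ⟨hSdes, hSsub⟩ := Finset.mem_filter.1 hSbad
            have hScard : ∀ k, (S k).card = s := (Finset.mem_filter.1 hSdes).2
            have hDk : ∀ k ∈ D, S k = T k := by
              intro k hk
              have : k ≠ j := by rintro rfl; exact hj hk
              rw [← hfS]; simp [hf, Function.update_of_ne this]
            rw [Finset.mem_coe, Finset.mem_powersetCard]
            refine ⟨?_, hScard j⟩
            intro a ha
            have := hSsub ha
            obtain ⟨k, hk, hak⟩ := Finset.mem_biUnion.1 this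
            exact Finset.mem_biUnion.2 ⟨k, hk, by rwa [← hDk k hk]⟩
          · intro S hS S' hS' hjj
            have hfS := (Finset.mem_filter.1 hS).2
            have hfS' := (Finset.mem_filter.1 hS').2
            funext k
            by_cases hk : k = j
            · subst hk; exact hjj
            · have : f S k = f S' k := by rw [hfS, hfS']
              simpa [hf, Function.update_of_ne hk] using this
      _ = (D.biUnion T).card.choose s := Finset.card_powersetCard s _
      _ ≤ t.choose s := Nat.choose_le_choose s hUcard
  have h2 : (2*t).choose s * (bad.image f).card ≤ (designSpace n t s).card := by
    have := Finset.mul_card_image_le_card_of_maps_to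
      (f := f) (s := (designSpace n t s).filter (fun S => f S ∈ bad.image f))
      (t := bad.image f) ?_ ((2*t).choose s) ?_
    · calc (2*t).choose s * (bad.image f).card ≤ _ := this
        _ ≤ (designSpace n t s).card := Finset.card_le_card (Finset.filter_subset _ _)
    · intro S hS; exact (Finset.mem_filter.1 hS).2
    · intro T hT
      obtain ⟨hTj, hTk⟩ := himg T hT
      calc (2*t).choose s = ((Finset.univ : Finset (Fin (2*t))).powersetCard s).card := by
            rw [Finset.card_powersetCard]; simp
        _ ≤ _ := by
          apply Finset.card_le_card_of_injOn (fun A => Function.update T j A)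
          · intro A hA
            rw [Finset.mem_coe, Finset.mem_powersetCard] at hA
            have hdes : Function.update T j A ∈ designSpace n t s := by
              simp only [designSpace, Finset.mem_filter, Finset.mem_univ, true_and]
              intro k
              by_cases hk : k = j
              · subst hk; simp [hA.2]
              · rw [Function.update_of_ne hk]; exact hTk k hk
            have hfT : f (Function.update T j A) = T := by
              funext k
              by_cases hk : k = j
              · subst hk; simp [hf, hTj]
              · simp [hf, Function.update_of_ne hk]
            exact Finset.mem_filter.2 ⟨Finset.mem_filter.2 ⟨hdes, by rw [hfT]; exact hT⟩, hfT⟩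
          · intro A hA A' hA' h
            have := congrFun h j
            simpa using this
  calc bad.card * (2*t).choose s
      ≤ (t.choose s * (bad.image f).card) * (2*t).choose s :=
        Nat.mul_le_mul_right _ h1
    _ = t.choose s * ((2*t).choose s * (bad.image f).card) := by ring
    _ ≤ t.choose s * (designSpace n t s).card := Nat.mul_le_mul_left _ h2

/-- `∑_{k ≤ d} C(n,k) ≤ (e n / d)^d` for `1 ≤ d ≤ n`. -/
lemma sum_choose_le (n d : ℕ) (hd : 1 ≤ d) (hdn : d ≤ n) :
    (∑ k ∈ Finset.range (d+1), (n.choose k : ℝ)) ≤ (Real.exp 1 * n / d) ^ d := by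
  have hnpos : (0:ℝ) < n := by
    have h1 : 1 ≤ n := le_trans hd hdn
    exact_mod_cast Nat.lt_of_lt_of_le Nat.zero_lt_one h1
  have hdpos : (0:ℝ) < d := by exact_mod_cast hd
  set x : ℝ := d / n with hx
  have hxpos : 0 < x := by positivity
  have hx1 : x ≤ 1 := by
    rw [hx, div_le_one hnpos]; exact_mod_cast hdn
  have key : (∑ k ∈ Finset.range (d+1), (n.choose k : ℝ)) * x ^ d ≤ Real.exp 1 ^ d := by
    calc (∑ k ∈ Finset.range (d+1), (n.choose k : ℝ)) * x ^ d
        = ∑ k ∈ Finset.range (d+1), (n.choose k : ℝ) * x ^ d := by rw [Finset.sum_mul]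
      _ ≤ ∑ k ∈ Finset.range (d+1), (n.choose k : ℝ) * x ^ k := by
          refine Finset.sum_le_sum (fun k hk => ?_)
          have hkd : k ≤ d := by
            have := Finset.mem_range.1 hk; omega
          exact mul_le_mul_of_nonneg_left
            (pow_le_pow_of_le_one (le_of_lt hxpos) hx1 hkd) (by positivity)
      _ ≤ ∑ k ∈ Finset.range (n+1), (n.choose k : ℝ) * x ^ k := by
          refine Finset.sum_le_sum_of_subset_of_nonneg
            (Finset.range_subset_range.2 (by omega)) (fun k _ _ => by positivity)
      _ = (x + 1) ^ n := by
          rw [add_pow]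
          refine Finset.sum_congr rfl (fun k _ => ?_)
          ring
      _ ≤ Real.exp x ^ n := by
          refine pow_le_pow_left₀ (by positivity) ?_ n
          linarith [Real.add_one_le_exp x]
      _ = Real.exp (n * x) := by rw [← Real.exp_nat_mul]
      _ = Real.exp 1 ^ d := by
          have : (n:ℝ) * x = d := by
            rw [hx]; field_simp
          rw [this, ← Real.exp_nat_mul, mul_one]
  have hxd : (0:ℝ) < x ^ d := by positivity
  rw [← le_div_iff₀ hxd] at key
  have hxe : Real.exp 1 / x = Real.exp 1 * n / d := by
    rw [hx]; field_simp
  calc (∑ k ∈ Finset.range (d+1), (n.choose k : ℝ)) ≤ Real.exp 1 ^ d / x ^ d := key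
    _ = (Real.exp 1 / x) ^ d := (div_pow _ _ _).symm
    _ = (Real.exp 1 * n / d) ^ d := by rw [hxe]


theorem mastermind_part1 (n c g t d : ℕ) (hc : 2 ≤ c) (hn : 2 ≤ n)
    (hg : 1 ≤ g) (hd : 1 ≤ d) (hdn : d ≤ n) (ht : 0 < t) (hdvd : d ∣ t)
    (htb : 2 * (d : ℝ) * Real.logb 2 n
        + min ((d : ℝ) * Real.logb 2 g)
            ((d : ℝ) ^ 2 * Real.logb 2 (Real.exp 1 * n / d)) ≤ t)
    (R : Fin n → ZMod c) (X : Fin g → Fin n → ZMod c)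
    (hX : ∀ i, (Finset.univ.filter (fun j => X i j ≠ R j)).card ≤ d) :
    1 - ((c : ℝ) - 1) / n ≤
      (((designSpace n t (t / d)).filter (allDistinguishing n c g t R X)).card : ℝ) /
        ((designSpace n t (t / d)).card : ℝ) := by
  classical
  haveI : NeZero c := ⟨by omega⟩
  set s := t / d with hs
  have hst : d * s = t := Nat.mul_div_cancel' hdvd
  have hs1 : 1 ≤ s := by
    rcases Nat.eq_zero_or_pos s with h | h
    · rw [h, mul_zero] at hst; omega
    · exact h
  have hs2t : s ≤ 2 * t := by nlinarith
  set Ω := designSpace n t s with hΩ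
  have hΩpos : 0 < Ω.card := by
    obtain ⟨A, -, hA⟩ := Finset.exists_subset_card_eq
      (s := (Finset.univ : Finset (Fin (2*t)))) (n := s) (by simpa using hs2t)
    refine Finset.card_pos.2 ⟨fun _ => A, ?_⟩
    simp only [hΩ, designSpace, Finset.mem_filter, Finset.mem_univ, true_and]
    exact fun _ => hA
  set bad := Ω.filter (fun S => ¬ allDistinguishing n c g t R X S) with hbd
  have hdpos : (0:ℝ) < d := by exact_mod_cast hd
  have htd : (t : ℝ) = d * s := by exact_mod_cast hst.symm
  have hC2pos : 0 < (2*t).choose s := Nat.choose_pos hs2t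
  -- the set D_l(X i) has small cardinality and avoids bad positions
  have hDcard : ∀ (i : Fin g) (l : ZMod c), l ≠ 0 →
      (Finset.univ.filter (fun k => X i k = R k + l)).card ≤ d := by
    intro i l hl
    refine le_trans (Finset.card_le_card ?_) (hX i)
    intro k hk
    simp only [Finset.mem_filter, Finset.mem_univ, true_and] at hk ⊢
    rw [hk]
    intro hcontra
    exact hl ((add_eq_left).1 hcontra)
  have key : n * bad.card ≤ (c - 1) * Ω.card := by
    rcases le_total ((d : ℝ) * Real.logb 2 g)
        ((d : ℝ) ^ 2 * Real.logb 2 (Real.exp 1 * n / d)) with hmm | hmm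
    · -- first branch: union over (i, l, j), uses 2^s ≥ n^2 g
      rw [min_eq_left hmm] at htb
      have hlogs : 2 * Real.logb 2 n + Real.logb 2 g ≤ s := by
        rw [htd] at htb
        have h1 : (d:ℝ) * (2 * Real.logb 2 n + Real.logb 2 g) ≤ d * s := by ring_nf; ring_nf at htb; linarith
        exact le_of_mul_le_mul_left h1 hdpos
      have hnum : (n^2 * g : ℕ) ≤ 2^s := by
        have hrn : (2:ℝ) ^ (Real.logb 2 n) = n := Real.rpow_logb two_pos (by norm_num) (by positivity)
        have hrg : (2:ℝ) ^ (Real.logb 2 g) = g := Real.rpow_logb two_pos (by norm_num) (by positivity)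
        have hng : ((n:ℝ)^2 * g) ≤ (2:ℝ) ^ (s:ℝ) := by
          calc ((n:ℝ)^2 * g) = ((2:ℝ) ^ (Real.logb 2 n))^2 * ((2:ℝ) ^ (Real.logb 2 g)) := by
                rw [hrn, hrg]
            _ = (2:ℝ) ^ (2 * Real.logb 2 n + Real.logb 2 g) := by
                rw [Real.rpow_add two_pos, mul_comm (2:ℝ) (Real.logb 2 n),
                  Real.rpow_mul (by norm_num), Real.rpow_two]
            _ ≤ (2:ℝ) ^ (s:ℝ) := Real.rpow_le_rpow_of_exponent_le (by norm_num) hlogs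
        have : ((n^2 * g : ℕ) : ℝ) ≤ ((2^s : ℕ) : ℝ) := by
          push_cast
          rw [← Real.rpow_natCast 2 s]
          exact hng
        exact_mod_cast this
      set idx := (Finset.univ : Finset (Fin g)) ×ˢ
        ((Finset.univ.filter (fun l : ZMod c => l ≠ 0)) ×ˢ (Finset.univ : Finset (Fin n)))
        with hidx
      set ev : Fin g × ZMod c × Fin n → Finset (Fin n → Finset (Fin (2*t))) := fun p =>
        Ω.filter (fun S => X p.1 p.2.2 ≠ R p.2.2 + p.2.1 ∧
          S p.2.2 ⊆ (Finset.univ.filter (fun k => X p.1 k = R k + p.2.1)).biUnion S) with hev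
      have hsub : bad ⊆ idx.biUnion ev := by
        intro S hS
        obtain ⟨hSΩ, hnd⟩ := Finset.mem_filter.1 hS
        simp only [allDistinguishing, not_forall] at hnd
        obtain ⟨i, l, hl, j, hj, hfail⟩ := hnd
        refine Finset.mem_biUnion.2 ⟨(i, l, j), ?_, ?_⟩
        · simp [hidx, hl]
        · refine Finset.mem_filter.2 ⟨hSΩ, hj, ?_⟩
          intro a ha
          push_neg at hfail
          obtain ⟨k, hk1, hk2⟩ := hfail a ha
          exact Finset.mem_biUnion.2 ⟨k, by simp [hk1], hk2⟩
      have hevbound : ∀ p ∈ idx, (ev p).card * (2*t).choose s ≤ t.choose s * Ω.card := by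
        rintro ⟨i, l, j⟩ hp
        have hl : l ≠ 0 := by
          simp only [hidx, Finset.mem_product, Finset.mem_filter] at hp
          exact hp.2.1.2
        by_cases hj : X i j ≠ R j + l
        · have heq : ev (i, l, j) = Ω.filter
              (fun S => S j ⊆ (Finset.univ.filter (fun k => X i k = R k + l)).biUnion S) := by
            apply Finset.filter_congr
            intro S _
            simp [hev, hj]
          rw [heq]
          exact bad_count n t s d hst j _ (by simp [hj]) (hDcard i l hl)
        · have heq : ev (i, l, j) = ∅ := by
            apply Finset.filter_false_of_mem
            intro S _
            push_neg at hj
            simp [hev, hj]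
          simp [heq]
      have hidxcard : idx.card = g * ((c - 1) * n) := by
        simp only [hidx, Finset.card_product, Finset.card_univ, Fintype.card_fin]
        congr 2
        rw [Finset.filter_ne', Finset.card_erase_of_mem (Finset.mem_univ _)]
        simp [ZMod.card]
      have hb2 : bad.card * (2*t).choose s ≤ idx.card * (t.choose s * Ω.card) := by
        calc bad.card * (2*t).choose s
            ≤ (∑ p ∈ idx, (ev p).card) * (2*t).choose s :=
              Nat.mul_le_mul_right _ (le_trans (Finset.card_le_card hsub) Finset.card_biUnion_le)
          _ = ∑ p ∈ idx, (ev p).card * (2*t).choose s := by rw [Finset.sum_mul]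
          _ ≤ ∑ p ∈ idx, t.choose s * Ω.card := Finset.sum_le_sum hevbound
          _ = idx.card * (t.choose s * Ω.card) := by rw [Finset.sum_const, smul_eq_mul]
      have hb3 : (n * bad.card) * (2*t).choose s ≤ ((c-1) * Ω.card) * (2*t).choose s := by
        calc (n * bad.card) * (2*t).choose s = n * (bad.card * (2*t).choose s) := by ring
          _ ≤ n * (idx.card * (t.choose s * Ω.card)) := Nat.mul_le_mul_left _ hb2
          _ = (c-1) * ((n^2 * g) * t.choose s) * Ω.card := by rw [hidxcard]; ring
          _ ≤ (c-1) * (2^s * t.choose s) * Ω.card :=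
              Nat.mul_le_mul_right _ (Nat.mul_le_mul_left _ (Nat.mul_le_mul_right _ hnum))
          _ ≤ (c-1) * (2*t).choose s * Ω.card :=
              Nat.mul_le_mul_right _ (Nat.mul_le_mul_left _ (pow_mul_choose_le t s))
          _ = ((c-1) * Ω.card) * (2*t).choose s := by ring
      exact Nat.le_of_mul_le_mul_right hb3 hC2pos
    · -- second branch: union over (D, j), uses 2^s ≥ n^2 (en/d)^d
      rw [min_eq_right hmm] at htb
      have hlogs : 2 * Real.logb 2 n + d * Real.logb 2 (Real.exp 1 * n / d) ≤ s := by
        rw [htd] at htb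
        have h1 : (d:ℝ) * (2 * Real.logb 2 n + d * Real.logb 2 (Real.exp 1 * n / d)) ≤ d * s := by
          ring_nf; ring_nf at htb; linarith
        exact le_of_mul_le_mul_left h1 hdpos
      set M := ((Finset.univ : Finset (Fin n)).powerset.filter (fun D => D.card ≤ d)) with hM
      have hMcard : (M.card : ℝ) = ∑ k ∈ Finset.range (d+1), (n.choose k : ℝ) := by
        have heq : M = (Finset.range (d+1)).biUnion
            (fun k => (Finset.univ : Finset (Fin n)).powersetCard k) := by
          ext A
          simp only [hM, Finset.mem_filter, Finset.mem_powerset, Finset.mem_biUnion,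
            Finset.mem_range, Finset.mem_powersetCard]
          constructor
          · rintro ⟨hsub, hcard⟩
            exact ⟨A.card, by omega, hsub, rfl⟩
          · rintro ⟨k, hk, hsub, rfl⟩
            exact ⟨hsub, by omega⟩
        rw [heq, Finset.card_biUnion]
        · push_cast
          refine Finset.sum_congr rfl (fun k _ => ?_)
          rw [Finset.card_powersetCard]
          simp
        · intro a _ b _ hab
          simp only [Finset.disjoint_left]
          intro A hA hB
          rw [Finset.mem_powersetCard] at hA hB
          exact hab (hA.2 ▸ hB.2)
      have hnum : (n^2 * M.card : ℕ) ≤ 2^s := by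
        have hend : (0:ℝ) < Real.exp 1 * n / d := by positivity
        have hrn : (2:ℝ) ^ (Real.logb 2 n) = n := Real.rpow_logb two_pos (by norm_num) (by positivity)
        have hre : (2:ℝ) ^ (Real.logb 2 (Real.exp 1 * n / d)) = Real.exp 1 * n / d :=
          Real.rpow_logb two_pos (by norm_num) hend
        have hng : ((n:ℝ)^2 * M.card) ≤ (2:ℝ) ^ (s:ℝ) := by
          calc ((n:ℝ)^2 * M.card) ≤ (n:ℝ)^2 * (Real.exp 1 * n / d) ^ d := by
                refine mul_le_mul_of_nonneg_left ?_ (by positivity)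
                rw [hMcard]
                exact sum_choose_le n d hd hdn
            _ = ((2:ℝ) ^ (Real.logb 2 n))^2 *
                ((2:ℝ) ^ (Real.logb 2 (Real.exp 1 * n / d)))^d := by rw [hrn, hre]
            _ = (2:ℝ) ^ (2 * Real.logb 2 n + d * Real.logb 2 (Real.exp 1 * n / d)) := by
                rw [Real.rpow_add two_pos, mul_comm (2:ℝ) (Real.logb 2 n),
                  Real.rpow_mul (by norm_num), Real.rpow_two,
                  mul_comm ((d:ℝ)) (Real.logb 2 (Real.exp 1 * n / d)),
                  Real.rpow_mul (by norm_num), Real.rpow_natCast]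
            _ ≤ (2:ℝ) ^ (s:ℝ) := Real.rpow_le_rpow_of_exponent_le (by norm_num) hlogs
        have : ((n^2 * M.card : ℕ) : ℝ) ≤ ((2^s : ℕ) : ℝ) := by
          push_cast
          rw [← Real.rpow_natCast 2 s]
          exact hng
        exact_mod_cast this
      set idx := (M ×ˢ (Finset.univ : Finset (Fin n))).filter (fun p => p.2 ∉ p.1) with hidx
      set ev : Finset (Fin n) × Fin n → Finset (Fin n → Finset (Fin (2*t))) := fun p =>
        Ω.filter (fun S => S p.2 ⊆ p.1.biUnion S) with hev
      have hsub : bad ⊆ idx.biUnion ev := by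
        intro S hS
        obtain ⟨hSΩ, hnd⟩ := Finset.mem_filter.1 hS
        simp only [allDistinguishing, not_forall] at hnd
        obtain ⟨i, l, hl, j, hj, hfail⟩ := hnd
        refine Finset.mem_biUnion.2
          ⟨(Finset.univ.filter (fun k => X i k = R k + l), j), ?_, ?_⟩
        · refine Finset.mem_filter.2 ⟨Finset.mem_product.2 ⟨?_, Finset.mem_univ _⟩, ?_⟩
          · exact Finset.mem_filter.2 ⟨Finset.mem_powerset.2 (Finset.filter_subset _ _),
              hDcard i l hl⟩
          · simp [hj]
        · refine Finset.mem_filter.2 ⟨hSΩ, ?_⟩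
          intro a ha
          push_neg at hfail
          obtain ⟨k, hk1, hk2⟩ := hfail a ha
          exact Finset.mem_biUnion.2 ⟨k, by simp [hk1], hk2⟩
      have hevbound : ∀ p ∈ idx, (ev p).card * (2*t).choose s ≤ t.choose s * Ω.card := by
        rintro ⟨D, j⟩ hp
        simp only [hidx, Finset.mem_filter, Finset.mem_product] at hp
        exact bad_count n t s d hst j D hp.2 (Finset.mem_filter.1 hp.1.1).2
      have hidxcard : idx.card ≤ M.card * n := by
        calc idx.card ≤ (M ×ˢ (Finset.univ : Finset (Fin n))).card :=
              Finset.card_le_card (Finset.filter_subset _ _)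
          _ = M.card * n := by rw [Finset.card_product]; simp
      have hb2 : bad.card * (2*t).choose s ≤ idx.card * (t.choose s * Ω.card) := by
        calc bad.card * (2*t).choose s
            ≤ (∑ p ∈ idx, (ev p).card) * (2*t).choose s :=
              Nat.mul_le_mul_right _ (le_trans (Finset.card_le_card hsub) Finset.card_biUnion_le)
          _ = ∑ p ∈ idx, (ev p).card * (2*t).choose s := by rw [Finset.sum_mul]
          _ ≤ ∑ p ∈ idx, t.choose s * Ω.card := Finset.sum_le_sum hevbound
          _ = idx.card * (t.choose s * Ω.card) := by rw [Finset.sum_const, smul_eq_mul]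
      have hb3 : (n * bad.card) * (2*t).choose s ≤ ((c-1) * Ω.card) * (2*t).choose s := by
        calc (n * bad.card) * (2*t).choose s = n * (bad.card * (2*t).choose s) := by ring
          _ ≤ n * (idx.card * (t.choose s * Ω.card)) := Nat.mul_le_mul_left _ hb2
          _ ≤ n * ((M.card * n) * (t.choose s * Ω.card)) := by
              exact Nat.mul_le_mul_left _ (Nat.mul_le_mul_right _ hidxcard)
          _ = ((n^2 * M.card) * t.choose s) * Ω.card := by ring
          _ ≤ (2^s * t.choose s) * Ω.card :=
              Nat.mul_le_mul_right _ (Nat.mul_le_mul_right _ hnum)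
          _ ≤ (2*t).choose s * Ω.card := Nat.mul_le_mul_right _ (pow_mul_choose_le t s)
          _ ≤ ((c-1) * Ω.card) * (2*t).choose s := by
              have h1 : 1 ≤ c - 1 := by omega
              calc (2*t).choose s * Ω.card = 1 * Ω.card * (2*t).choose s := by ring
                _ ≤ ((c-1) * Ω.card) * (2*t).choose s := by
                    exact Nat.mul_le_mul_right _ (Nat.mul_le_mul_right _ h1)
      exact Nat.le_of_mul_le_mul_right hb3 hC2pos
  -- conclude
  have hgb : (Ω.filter (allDistinguishing n c g t R X)).card + bad.card = Ω.card := by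
    rw [hbd]
    exact Finset.card_filter_add_card_filter_not _
  have hΩR : (0:ℝ) < Ω.card := by exact_mod_cast hΩpos
  have hnR : (0:ℝ) < n := by positivity
  have hbadR : (bad.card : ℝ) / Ω.card ≤ ((c:ℝ) - 1) / n := by
    rw [div_le_div_iff₀ hΩR hnR]
    have hcast : ((c:ℝ) - 1) = ((c - 1 : ℕ) : ℝ) := by
      have h1 : (1:ℕ) ≤ c := by omega
      push_cast [Nat.cast_sub h1]
      ring
    rw [hcast]
    calc (bad.card : ℝ) * n = ((n * bad.card : ℕ) : ℝ) := by push_cast; ring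
      _ ≤ (((c-1) * Ω.card : ℕ) : ℝ) := by exact_mod_cast key
      _ = ((c-1:ℕ) : ℝ) * Ω.card := by push_cast; ring
  have hgood : ((Ω.filter (allDistinguishing n c g t R X)).card : ℝ) / Ω.card
      = 1 - (bad.card : ℝ) / Ω.card := by
    have h2 : ((Ω.filter (allDistinguishing n c g t R X)).card : ℝ) = Ω.card - bad.card := by
      have h3 := hgb
      have : ((Ω.filter (allDistinguishing n c g t R X)).card : ℝ) + bad.card = Ω.card := by
        exact_mod_cast congrArg (Nat.cast : ℕ → ℝ) h3
      linarith
    rw [h2, sub_div, div_self (ne_of_gt hΩR)]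
  rw [hgood]
  linarith

lemma decode (n c g t : ℕ) (hc : 2 ≤ c) (R : Fin n → ZMod c) (X : Fin g → Fin n → ZMod c)
    (S : Fin n → Finset (Fin (2 * t))) (hS : allDistinguishing n c g t R X S) :
    ∃ F : ℕ → (Fin (2 * t) → {l : ZMod c // l ≠ 0} → ℕ) → (Fin n → ZMod c),
      ∀ i : Fin g,
        F ((Finset.univ.filter (fun j => R j = X i j)).card)
          (fun k l => (Finset.univ.filter
            (fun j => (if k ∈ S j then R j + (l : ZMod c) else R j) = X i j)).card)
          = X i := by
  classical
  haveI : NeZero c := ⟨by omega⟩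
  set Tc : Fin (2*t) → ℕ := fun b => (Finset.univ.filter (fun j => b ∈ S j)).card with hTc
  set m : ℕ → (Fin (2*t) → {l : ZMod c // l ≠ 0} → ℕ) → Fin (2*t) → {l : ZMod c // l ≠ 0} → ℤ :=
    fun a f b l => (f b l : ℤ) - a
      + ((Tc b : ℤ) - ∑ l' : {l : ZMod c // l ≠ 0}, ((f b l' : ℤ) - a)) / c with hm
  refine ⟨fun a f j => R j + ∑ l : {l : ZMod c // l ≠ 0},
    (if ∀ b ∈ S j, m a f b l ≠ 0 then (l : ZMod c) else 0), ?_⟩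
  intro i
  set a : ℕ := (Finset.univ.filter (fun j => R j = X i j)).card with ha0
  set f : Fin (2*t) → {l : ZMod c // l ≠ 0} → ℕ := fun k l =>
    (Finset.univ.filter
      (fun j => (if k ∈ S j then R j + (l : ZMod c) else R j) = X i j)).card with hf0
  set A1 : Fin (2*t) → ZMod c → Finset (Fin n) := fun b l =>
    Finset.univ.filter (fun j => b ∈ S j ∧ X i j = R j + l) with hA1
  set A2 : Fin (2*t) → Finset (Fin n) := fun b =>
    Finset.univ.filter (fun j => b ∉ S j ∧ X i j = R j) with hA2
  have hfeq : ∀ b (l : {l : ZMod c // l ≠ 0}), f b l = (Finset.univ.filter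
      (fun j => (if b ∈ S j then R j + (l : ZMod c) else R j) = X i j)).card := fun _ _ => rfl
  have hTceq : ∀ b, Tc b = (Finset.univ.filter (fun j => b ∈ S j)).card := fun _ => rfl
  have hdisj : ∀ b l, Disjoint (A1 b l) (A2 b) := by
    intro b l
    rw [Finset.disjoint_left]
    intro j hj1 hj2
    rw [hA1, Finset.mem_filter] at hj1
    rw [hA2, Finset.mem_filter] at hj2
    exact hj2.2.1 hj1.2.1
  have hf : ∀ b (l : {l : ZMod c // l ≠ 0}), f b l = (A1 b (l : ZMod c)).card + (A2 b).card := by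
    intro b l
    rw [hfeq]
    have : (Finset.univ.filter
        (fun j => (if b ∈ S j then R j + (l : ZMod c) else R j) = X i j))
        = A1 b (l : ZMod c) ∪ A2 b := by
      ext j
      by_cases h : b ∈ S j <;>
        simp [hA1, hA2, h, eq_comm]
    rw [this, Finset.card_union_of_disjoint (hdisj b _)]
  have ha : ∀ b, a = (A1 b 0).card + (A2 b).card := by
    intro b
    rw [ha0]
    have : (Finset.univ.filter (fun j => R j = X i j)) = A1 b 0 ∪ A2 b := by
      ext j
      by_cases h : b ∈ S j <;>
        simp [hA1, hA2, h, eq_comm]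
    rw [this, Finset.card_union_of_disjoint (hdisj b _)]
  have hsumA1 : ∀ b, (∑ l : ZMod c, (A1 b l).card) = Tc b := by
    intro b
    rw [hTceq]
    rw [Finset.card_eq_sum_card_fiberwise
      (f := fun j => X i j - R j) (t := Finset.univ) (fun x _ => Finset.mem_univ _)]
    refine Finset.sum_congr rfl (fun l _ => ?_)
    congr 1
    ext j
    simp only [hA1, Finset.mem_filter, Finset.mem_univ, true_and, Finset.filter_filter]
    constructor
    · rintro ⟨h1, h2⟩; exact ⟨h1, by rw [h2]; ring⟩
    · rintro ⟨h1, h2⟩; exact ⟨h1, by rw [← h2]; ring⟩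
  have hcardsub : (Finset.univ : Finset {l : ZMod c // l ≠ 0}).card = c - 1 := by
    simp only [Finset.card_univ, ne_eq]
    rw [Fintype.card_subtype_compl, Fintype.card_subtype_eq, ZMod.card]
  -- the sum over nonzero l of (A1 b l).card
  have hsub : ∀ b, (∑ l' : {l : ZMod c // l ≠ 0}, ((A1 b (l' : ZMod c)).card : ℤ))
      = (Tc b : ℤ) - (A1 b 0).card := by
    intro b
    have h1 : (∑ l' : {l : ZMod c // l ≠ 0}, ((A1 b (l' : ZMod c)).card : ℤ))
        = ∑ l ∈ (Finset.univ : Finset (ZMod c)).erase 0, ((A1 b l).card : ℤ) := by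
      rw [Finset.sum_subtype (p := fun l : ZMod c => l ≠ 0)
        ((Finset.univ : Finset (ZMod c)).erase 0)
        (fun x => by simp) (fun l => ((A1 b l).card : ℤ))]
    rw [h1]
    have h2 : (∑ l ∈ (Finset.univ : Finset (ZMod c)).erase 0, ((A1 b l).card : ℤ))
        + ((A1 b 0).card : ℤ) = ∑ l : ZMod c, ((A1 b l).card : ℤ) :=
      Finset.sum_erase_add _ _ (Finset.mem_univ 0)
    have h3 : (∑ l : ZMod c, ((A1 b l).card : ℤ)) = (Tc b : ℤ) := by
      rw [← hsumA1 b]; push_cast; ring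
    omega
  have hmval : ∀ b (l : {l : ZMod c // l ≠ 0}), m a f b l = ((A1 b (l : ZMod c)).card : ℤ) := by
    intro b l
    have hsum : (∑ l' : {l : ZMod c // l ≠ 0}, ((f b l' : ℤ) - a))
        = (Tc b : ℤ) - c * (A1 b 0).card := by
      have : ∀ l' : {l : ZMod c // l ≠ 0}, ((f b l' : ℤ) - a)
          = ((A1 b (l' : ZMod c)).card : ℤ) - (A1 b 0).card := by
        intro l'
        rw [hf b l', ha b]
        push_cast
        ring
      rw [Finset.sum_congr rfl (fun l' _ => this l')]
      rw [Finset.sum_sub_distrib, hsub b, Finset.sum_const, hcardsub]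
      have : ((c:ℤ) - 1) = ((c - 1 : ℕ) : ℤ) := by
        have : (1:ℕ) ≤ c := by omega
        push_cast [Nat.cast_sub this]; ring
      rw [nsmul_eq_mul, ← this]
      ring
    have hdiv : ((Tc b : ℤ) - ∑ l' : {l : ZMod c // l ≠ 0}, ((f b l' : ℤ) - a)) / c
        = ((A1 b 0).card : ℤ) := by
      rw [hsum]
      have : (Tc b : ℤ) - ((Tc b : ℤ) - c * (A1 b 0).card) = c * (A1 b 0).card := by ring
      rw [this]
      exact Int.mul_ediv_cancel_left _ (by exact_mod_cast (by omega : c ≠ 0))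
    rw [hm]
    simp only
    rw [hdiv, hf b l, ha b]
    push_cast
    ring
  -- characterization
  have hchar : ∀ j (l : {l : ZMod c // l ≠ 0}),
      (∀ b ∈ S j, m a f b l ≠ 0) ↔ X i j = R j + (l : ZMod c) := by
    intro j l
    constructor
    · intro h
      by_contra hne
      obtain ⟨b, hb, hb2⟩ := hS i (l : ZMod c) l.2 j hne
      refine h b hb ?_
      rw [hmval b l]
      have : A1 b (l : ZMod c) = ∅ := by
        ext k
        simp only [hA1, Finset.mem_filter, Finset.mem_univ, true_and, Finset.notMem_empty,
          iff_false, not_and]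
        intro hbk hxk
        exact (hb2 k hxk) hbk
      rw [this]
      simp
    · intro h b hb
      rw [hmval b l]
      have : j ∈ A1 b (l : ZMod c) := by
        simp only [hA1, Finset.mem_filter, Finset.mem_univ, true_and]
        exact ⟨hb, h⟩
      have := Finset.card_pos.2 ⟨j, this⟩
      simp only [ne_eq, Nat.cast_eq_zero]
      omega
  -- compute F
  funext j
  simp only
  rw [Finset.sum_congr rfl (fun l _ => by
    rw [if_congr (hchar j l) rfl rfl])]
  by_cases h0 : X i j = R j
  · have : ∀ l : {l : ZMod c // l ≠ 0},
        (if X i j = R j + (l : ZMod c) then (l : ZMod c) else 0) = 0 := by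
      intro l
      rw [if_neg]
      intro hcontra
      rw [h0] at hcontra
      exact l.2 ((left_eq_add).1 hcontra)
    rw [Finset.sum_congr rfl (fun l _ => this l), Finset.sum_const, smul_zero, add_zero, ← h0]
  · have hl0 : X i j - R j ≠ 0 := sub_ne_zero.2 h0
    set l0 : {l : ZMod c // l ≠ 0} := ⟨X i j - R j, hl0⟩ with hl0def
    have : ∀ l : {l : ZMod c // l ≠ 0},
        (if X i j = R j + (l : ZMod c) then (l : ZMod c) else 0)
        = (if l = l0 then (l : ZMod c) else 0) := by
      intro l
      congr 1
      simp only [eq_iff_iff]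
      constructor
      · intro h
        apply Subtype.ext
        simp only [hl0def]
        rw [h]; ring
      · rintro rfl
        simp only [hl0def]
        ring
    rw [Finset.sum_congr rfl (fun l _ => this l), Finset.sum_ite_eq' Finset.univ l0]
    simp [hl0def]

/-- Theorem 2: Let `c ≥ 2`, `n ≥ 2`, `g ≥ 1`, let `R` be a
reference string and `X₁, …, X_g : Fin n → ZMod c` strings each differing from
`R` in at most `d` positions, `1 ≤ d ≤ n`.  Let `t` be a positive multiple of
`d` with `t ≥ 2·d·log₂ n + min (d·log₂ g) (d²·log₂(e·n/d))`.  Then with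
probability at least `1 - (c-1)/n` the random design with `2t` tests and
column-sparsity `t/d` is simultaneously `D_l(Xᵢ)`-distinguishing for every `i`
and every nonzero `l`; and on this event every `Xᵢ` is uniquely determined by
(i.e., there is a decoding function recovering `Xᵢ` from) the responses
`b(R, Xᵢ)` and `b(Q_{k,l}, Xᵢ)` to the `2t(c-1)` nonadaptive shifted queries
`Q_{k,l}` (equal to `R j + l` at positions `j` of test `k`, and `R j`
elsewhere). -/
theorem mastermind_cloning_attack (n c g t d : ℕ) (hc : 2 ≤ c) (hn : 2 ≤ n)
    (hg : 1 ≤ g) (hd : 1 ≤ d) (hdn : d ≤ n) (ht : 0 < t) (hdvd : d ∣ t)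
    (htb : 2 * (d : ℝ) * Real.logb 2 n
        + min ((d : ℝ) * Real.logb 2 g)
            ((d : ℝ) ^ 2 * Real.logb 2 (Real.exp 1 * n / d)) ≤ t)
    (R : Fin n → ZMod c) (X : Fin g → Fin n → ZMod c)
    (hX : ∀ i, (Finset.univ.filter (fun j => X i j ≠ R j)).card ≤ d) :
    1 - ((c : ℝ) - 1) / n ≤
      (((designSpace n t (t / d)).filter (allDistinguishing n c g t R X)).card : ℝ) /
        ((designSpace n t (t / d)).card : ℝ) ∧
    ∀ S ∈ designSpace n t (t / d), allDistinguishing n c g t R X S →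
      ∃ F : ℕ → (Fin (2 * t) → {l : ZMod c // l ≠ 0} → ℕ) → (Fin n → ZMod c),
        ∀ i : Fin g,
          F ((Finset.univ.filter (fun j => R j = X i j)).card)
            (fun k l => (Finset.univ.filter
              (fun j => (if k ∈ S j then R j + (l : ZMod c) else R j) = X i j)).card)
            = X i := by
  constructor
  · exact mastermind_part1 n c g t d hc hn hg hd hdn ht hdvd htb R X hX
  · intro S _ hdist
    exact decode n c g t hc R X S hdist
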